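/- arXiv:2008.07460 — 5 statements merged into one kernel-verified Lean document; each statement's English description precedes it below -/
import Mathlib

section
/- Let (X, ≼) be a countable dense unbounded linear order, and let P be the set of finite partial functions p from X to ℚ such that x ≺ y implies p(x) < p(y) for all x, y in dom(p), ordered by reverse inclusion. Then for every x ∈ X, the set { p ∈ P : x ∈ dom(p) } is dense in P. -/
/-- A condition: finite partial strictly order-preserving function from `X` to `ℚ`,
viewed as a set of pairs. -/
def IsOrderCond {X : Type*} [LinearOrder X] (p : Set (X × ℚ)) : Prop :=
  p.Finite ∧ (∀ ⦃x : X⦄ ⦃a a' : ℚ⦄, (x, a) ∈ p → (x, a') ∈ p → a = a') ∧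
    ∀ ⦃x y : X⦄ ⦃a b : ℚ⦄, (x, a) ∈ p → (y, b) ∈ p → x < y → a < b

/-- Separating a finite lower set from a finite upper set of rationals. -/
lemma exists_sep (L U : Finset ℚ) (h : ∀ b ∈ L, ∀ c ∈ U, b < c) :
    ∃ a : ℚ, (∀ b ∈ L, b < a) ∧ ∀ c ∈ U, a < c := by
  rcases L.eq_empty_or_nonempty with hL | hL
  · rcases U.eq_empty_or_nonempty with hU | hU
    · exact ⟨0, by simp [hL], by simp [hU]⟩
    · refine ⟨U.min' hU - 1, by simp [hL], fun c hc => ?_⟩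
      have := U.min'_le c hc
      linarith
  · rcases U.eq_empty_or_nonempty with hU | hU
    · refine ⟨L.max' hL + 1, fun b hb => ?_, by simp [hU]⟩
      have := L.le_max' b hb
      linarith
    · have hlt : L.max' hL < U.min' hU :=
        h _ (L.max'_mem hL) _ (U.min'_mem hU)
      obtain ⟨a, ha1, ha2⟩ := exists_between hlt
      exact ⟨a, fun b hb => lt_of_le_of_lt (L.le_max' b hb) ha1,
        fun c hc => lt_of_lt_of_le ha2 (U.min'_le c hc)⟩

/-- For a countable dense unbounded linear order `X`, the set of conditions whose
domain contains `x` is dense in the poset of conditions (ordered by reverse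
inclusion). -/
theorem dense_dom_mem_orderCond {X : Type*} [LinearOrder X] [Countable X]
    [DenselyOrdered X] [NoMinOrder X] [NoMaxOrder X] (x : X) :
    ∀ p : Set (X × ℚ), IsOrderCond p →
      ∃ q : Set (X × ℚ), IsOrderCond q ∧ p ⊆ q ∧ ∃ a : ℚ, (x, a) ∈ q := by
  intro p hp
  obtain ⟨hfin, hfun, hmono⟩ := hp
  by_cases hx : ∃ a : ℚ, (x, a) ∈ p
  · exact ⟨p, ⟨hfin, hfun, hmono⟩, subset_rfl, hx⟩
  · -- x not in domain; choose a value
    set s := hfin.toFinset with hs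
    set L := (s.filter (fun z => z.1 < x)).image Prod.snd with hLdef
    set U := (s.filter (fun z => x < z.1)).image Prod.snd with hUdef
    have hLU : ∀ b ∈ L, ∀ c ∈ U, b < c := by
      intro b hb c hc
      simp only [hLdef, hUdef, Finset.mem_image, Finset.mem_filter, hs,
        Set.Finite.mem_toFinset] at hb hc
      obtain ⟨⟨y, b'⟩, ⟨hyp, hyx⟩, rfl⟩ := hb
      obtain ⟨⟨z, c'⟩, ⟨hzp, hxz⟩, rfl⟩ := hc
      exact hmono hyp hzp (hyx.trans hxz)
    obtain ⟨a, haL, haU⟩ := exists_sep L U hLU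
    have hmemL : ∀ ⦃y : X⦄ ⦃b : ℚ⦄, (y, b) ∈ p → y < x → b < a := by
      intro y b hyb hyx
      refine haL b ?_
      simp only [hLdef, Finset.mem_image, Finset.mem_filter, hs, Set.Finite.mem_toFinset]
      exact ⟨(y, b), ⟨hyb, hyx⟩, rfl⟩
    have hmemU : ∀ ⦃y : X⦄ ⦃b : ℚ⦄, (y, b) ∈ p → x < y → a < b := by
      intro y b hyb hxy
      refine haU b ?_
      simp only [hUdef, Finset.mem_image, Finset.mem_filter, hs, Set.Finite.mem_toFinset]
      exact ⟨(y, b), ⟨hyb, hxy⟩, rfl⟩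
    refine ⟨insert (x, a) p, ⟨hfin.insert _, ?_, ?_⟩, Set.subset_insert _ _,
      a, Set.mem_insert _ _⟩
    · intro y b b' hb hb'
      rcases hb with hb | hb <;> rcases hb' with hb' | hb'
      · rw [Prod.mk.injEq] at hb hb'; rw [hb.2, hb'.2]
      · rw [Prod.mk.injEq] at hb; exact absurd ⟨b', hb.1 ▸ hb'⟩ hx
      · rw [Prod.mk.injEq] at hb'; exact absurd ⟨b, hb'.1 ▸ hb⟩ hx
      · exact hfun hb hb'
    · intro y z b c hb hc hyz
      rcases hb with hb | hb <;> rcases hc with hc | hc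
      · exfalso
        rw [Prod.mk.injEq] at hb hc
        rw [hb.1, hc.1] at hyz; exact lt_irrefl _ hyz
      · rw [Prod.mk.injEq] at hb
        exact hb.2 ▸ hmemU hc (hb.1 ▸ hyz)
      · rw [Prod.mk.injEq] at hc
        exact hc.2 ▸ hmemL hb (hc.1 ▸ hyz)
      · exact hmono hb hc hyz
end

section
/- Let C ⊆ C₀ and D ⊆ D₀ be Boolean subalgebras, u ∈ C₀, w ∈ D₀, and h : C → D a Boolean isomorphism such that for all x ∈ C: x ≤ u' iff h(x) ≤ w', and x ≤ u iff h(x) ≤ w. Then there exists a Boolean isomorphism H : C(u) → D(w) extending h with H(u) = w. -/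
/-- `C` is a Boolean subalgebra of the ambient Boolean algebra, viewed as a set. -/
def IsBoolSubalg {A : Type*} [BooleanAlgebra A] (C : Set A) : Prop :=
  (⊥ : A) ∈ C ∧ (⊤ : A) ∈ C ∧ (∀ a ∈ C, ∀ b ∈ C, a ⊔ b ∈ C) ∧
    (∀ a ∈ C, ∀ b ∈ C, a ⊓ b ∈ C) ∧ (∀ a ∈ C, aᶜ ∈ C)

/-- The smallest Boolean subalgebra containing a set `S`. -/
def boolSubalgClosure {A : Type*} [BooleanAlgebra A] (S : Set A) : Set A :=
  ⋂₀ {T : Set A | IsBoolSubalg T ∧ S ⊆ T}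

/-- `h` is a Boolean isomorphism from the subalgebra `C` onto the subalgebra `D`. -/
def IsBoolIsoOn {A B : Type*} [BooleanAlgebra A] [BooleanAlgebra B]
    (h : A → B) (C : Set A) (D : Set B) : Prop :=
  Set.BijOn h C D ∧ (∀ a ∈ C, ∀ b ∈ C, h (a ⊔ b) = h a ⊔ h b) ∧
    (∀ a ∈ C, ∀ b ∈ C, h (a ⊓ b) = h a ⊓ h b) ∧ (∀ a ∈ C, h aᶜ = (h a)ᶜ)

section Aux
variable {A : Type*} [BooleanAlgebra A]

lemma pair_sup (a b c d u : A) :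
    ((a⊓u)⊔(b⊓uᶜ)) ⊔ ((c⊓u)⊔(d⊓uᶜ)) = ((a⊔c)⊓u)⊔((b⊔d)⊓uᶜ) := by
  rw [inf_sup_right, inf_sup_right]; ac_rfl

lemma pair_inf (a b c d u : A) :
    ((a⊓u)⊔(b⊓uᶜ)) ⊓ ((c⊓u)⊔(d⊓uᶜ)) = ((a⊓c)⊓u)⊔((b⊓d)⊓uᶜ) := by
  rw [inf_sup_right, inf_sup_left, inf_sup_left]
  have h1 : (a⊓u)⊓(c⊓u) = a⊓c⊓u := by rw [inf_inf_inf_comm, inf_idem]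
  have h2 : (a⊓u)⊓(d⊓uᶜ) = ⊥ := by rw [inf_inf_inf_comm, inf_compl_eq_bot, inf_bot_eq]
  have h3 : (b⊓uᶜ)⊓(c⊓u) = ⊥ := by rw [inf_inf_inf_comm, compl_inf_eq_bot, inf_bot_eq]
  have h4 : (b⊓uᶜ)⊓(d⊓uᶜ) = b⊓d⊓uᶜ := by rw [inf_inf_inf_comm, inf_idem]
  rw [h1, h2, h3, h4, sup_bot_eq, bot_sup_eq]

lemma pair_compl (a b u : A) : ((a⊓u)⊔(b⊓uᶜ))ᶜ = (aᶜ⊓u)⊔(bᶜ⊓uᶜ) := by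
  apply compl_unique
  · rw [pair_inf]; simp [inf_compl_eq_bot, compl_inf_eq_bot]
  · rw [pair_sup]; simp

lemma pair_self (a u : A) : (a⊓u)⊔(a⊓uᶜ) = a := by
  rw [← inf_sup_left, sup_compl_eq_top, inf_top_eq]

lemma pair_meet_left (c d w : A) : ((c⊓w)⊔(d⊓wᶜ))⊓w = c⊓w := by
  rw [inf_sup_right, inf_assoc, inf_idem, inf_assoc, compl_inf_eq_bot, inf_bot_eq, sup_bot_eq]

lemma pair_meet_right (c d w : A) : ((c⊓w)⊔(d⊓wᶜ))⊓wᶜ = d⊓wᶜ := by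
  rw [inf_sup_right, inf_assoc, inf_compl_eq_bot, inf_bot_eq, bot_sup_eq, inf_assoc, inf_idem]

lemma le_compl_iff' (x u : A) : x ≤ uᶜ ↔ x ⊓ u = ⊥ := by
  rw [le_compl_iff_disjoint_right, disjoint_iff]

lemma inf_eq_inf_iff (a a' u : A) :
    a ⊓ u = a' ⊓ u ↔ (a ⊓ a'ᶜ ≤ uᶜ ∧ a' ⊓ aᶜ ≤ uᶜ) := by
  constructor
  · intro h
    constructor
    · rw [le_compl_iff']
      calc a ⊓ a'ᶜ ⊓ u = a ⊓ u ⊓ a'ᶜ := by ac_rfl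
        _ = a' ⊓ u ⊓ a'ᶜ := by rw [h]
        _ = a' ⊓ a'ᶜ ⊓ u := by ac_rfl
        _ = ⊥ := by rw [inf_compl_eq_bot, bot_inf_eq]
    · rw [le_compl_iff']
      calc a' ⊓ aᶜ ⊓ u = a' ⊓ u ⊓ aᶜ := by ac_rfl
        _ = a ⊓ u ⊓ aᶜ := by rw [h]
        _ = a ⊓ aᶜ ⊓ u := by ac_rfl
        _ = ⊥ := by rw [inf_compl_eq_bot, bot_inf_eq]
  · rintro ⟨ha, hb⟩
    have key : ∀ x y : A, x ⊓ yᶜ ≤ uᶜ → x ⊓ u ≤ y ⊓ u := by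
      intro x y hx
      refine le_inf ?_ inf_le_right
      have hxy : x ⊓ u ⊓ yᶜ = ⊥ := by
        rw [le_compl_iff'] at hx
        calc x ⊓ u ⊓ yᶜ = x ⊓ yᶜ ⊓ u := by ac_rfl
          _ = ⊥ := hx
      calc x ⊓ u = x ⊓ u ⊓ (y ⊔ yᶜ) := by rw [sup_compl_eq_top, inf_top_eq]
        _ = (x ⊓ u ⊓ y) ⊔ (x ⊓ u ⊓ yᶜ) := inf_sup_left _ _ _
        _ = x ⊓ u ⊓ y := by rw [hxy, sup_bot_eq]
        _ ≤ y := inf_le_right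
    exact le_antisymm (key a a' ha) (key a' a hb)

lemma closure_eq {C : Set A} (hC : IsBoolSubalg C) (u : A) :
    boolSubalgClosure (C ∪ {u}) = {x | ∃ a ∈ C, ∃ b ∈ C, x = (a ⊓ u) ⊔ (b ⊓ uᶜ)} := by
  obtain ⟨hbot, htop, hsup, hinf, hcompl⟩ := hC
  apply subset_antisymm
  · apply Set.sInter_subset_of_mem
    refine ⟨⟨⟨⊥, hbot, ⊥, hbot, by simp⟩, ⟨⊤, htop, ⊤, htop, (pair_self ⊤ u).symm⟩,
      ?_, ?_, ?_⟩, ?_⟩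
    · rintro x ⟨a, ha, b, hb, rfl⟩ y ⟨c, hc, d, hd, rfl⟩
      exact ⟨a ⊔ c, hsup a ha c hc, b ⊔ d, hsup b hb d hd, pair_sup a b c d u⟩
    · rintro x ⟨a, ha, b, hb, rfl⟩ y ⟨c, hc, d, hd, rfl⟩
      exact ⟨a ⊓ c, hinf a ha c hc, b ⊓ d, hinf b hb d hd, pair_inf a b c d u⟩
    · rintro x ⟨a, ha, b, hb, rfl⟩
      exact ⟨aᶜ, hcompl a ha, bᶜ, hcompl b hb, pair_compl a b u⟩
    · rintro x (hx | hx)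
      · exact ⟨x, hx, x, hx, (pair_self x u).symm⟩
      · rcases hx with rfl
        exact ⟨⊤, htop, ⊥, hbot, by simp⟩
  · rintro x ⟨a, ha, b, hb, rfl⟩ T ⟨hT, hsub⟩
    have haT : a ∈ T := hsub (Or.inl ha)
    have hbT : b ∈ T := hsub (Or.inl hb)
    have huT : u ∈ T := hsub (Or.inr rfl)
    exact hT.2.2.1 _ (hT.2.2.2.1 a haT u huT) _ (hT.2.2.2.1 b hbT uᶜ (hT.2.2.2.2 u huT))
end Aux

/-- Extension lemma: if a Boolean isomorphism `h : C → D` satisfies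
`x ≤ u' ↔ h x ≤ w'` and `x ≤ u ↔ h x ≤ w` for all `x ∈ C`, then it extends to a
Boolean isomorphism `H : C(u) → D(w)` with `H u = w`. -/
theorem extension_lemma {A B : Type*} [BooleanAlgebra A] [BooleanAlgebra B]
    {C : Set A} {D : Set B} (hC : IsBoolSubalg C) (hD : IsBoolSubalg D)
    (u : A) (w : B) (h : A → B) (hiso : IsBoolIsoOn h C D)
    (h1 : ∀ x ∈ C, x ≤ uᶜ ↔ h x ≤ wᶜ)
    (h2 : ∀ x ∈ C, x ≤ u ↔ h x ≤ w) :
    ∃ H : A → B,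
      IsBoolIsoOn H (boolSubalgClosure (C ∪ {u})) (boolSubalgClosure (D ∪ {w})) ∧
      Set.EqOn H h C ∧ H u = w := by
  classical
  obtain ⟨hbij, hsupH, hinfH, hcomplH⟩ := hiso
  obtain ⟨hCbot, hCtop, hCsup, hCinf, hCcompl⟩ := id hC
  obtain ⟨hDbot, hDtop, hDsup, hDinf, hDcompl⟩ := id hD
  have hmemC : ∀ x, x ∈ boolSubalgClosure (C ∪ {u}) ↔
      ∃ a ∈ C, ∃ b ∈ C, x = (a ⊓ u) ⊔ (b ⊓ uᶜ) := by
    intro x; rw [closure_eq hC u]; rfl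
  have hmemD : ∀ y, y ∈ boolSubalgClosure (D ∪ {w}) ↔
      ∃ c ∈ D, ∃ d ∈ D, y = (c ⊓ w) ⊔ (d ⊓ wᶜ) := by
    intro y; rw [closure_eq hD w]; rfl
  have hbot0 : h ⊥ = ⊥ := by
    have e := hinfH ⊥ hCbot ⊥ᶜ (hCcompl ⊥ hCbot)
    rw [hcomplH ⊥ hCbot, inf_compl_eq_bot] at e
    rw [e, inf_compl_eq_bot]
  have htop0 : h ⊤ = ⊤ := by
    have e := hcomplH ⊥ hCbot
    rw [hbot0, compl_bot, compl_bot] at e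
    exact e
  -- transfer lemmas
  have trans1 : ∀ a ∈ C, ∀ a' ∈ C, (a ⊓ u = a' ⊓ u ↔ h a ⊓ w = h a' ⊓ w) := by
    intro a ha a' ha'
    rw [inf_eq_inf_iff, inf_eq_inf_iff]
    have e1 : h (a ⊓ a'ᶜ) = h a ⊓ (h a')ᶜ := by
      rw [hinfH a ha a'ᶜ (hCcompl a' ha'), hcomplH a' ha']
    have e2 : h (a' ⊓ aᶜ) = h a' ⊓ (h a)ᶜ := by
      rw [hinfH a' ha' aᶜ (hCcompl a ha), hcomplH a ha]
    rw [← e1, ← e2]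
    exact and_congr (h1 _ (hCinf a ha a'ᶜ (hCcompl a' ha')))
      (h1 _ (hCinf a' ha' aᶜ (hCcompl a ha)))
  have trans2 : ∀ b ∈ C, ∀ b' ∈ C, (b ⊓ uᶜ = b' ⊓ uᶜ ↔ h b ⊓ wᶜ = h b' ⊓ wᶜ) := by
    intro b hb b' hb'
    rw [inf_eq_inf_iff, inf_eq_inf_iff, compl_compl, compl_compl]
    have e1 : h (b ⊓ b'ᶜ) = h b ⊓ (h b')ᶜ := by
      rw [hinfH b hb b'ᶜ (hCcompl b' hb'), hcomplH b' hb']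
    have e2 : h (b' ⊓ bᶜ) = h b' ⊓ (h b)ᶜ := by
      rw [hinfH b' hb' bᶜ (hCcompl b hb), hcomplH b hb]
    rw [← e1, ← e2]
    exact and_congr (h2 _ (hCinf b hb b'ᶜ (hCcompl b' hb')))
      (h2 _ (hCinf b' hb' bᶜ (hCcompl b hb)))
  -- well-definedness
  have welldef : ∀ a ∈ C, ∀ b ∈ C, ∀ a' ∈ C, ∀ b' ∈ C,
      (a⊓u)⊔(b⊓uᶜ) = (a'⊓u)⊔(b'⊓uᶜ) →
      (h a ⊓ w)⊔(h b ⊓ wᶜ) = (h a' ⊓ w)⊔(h b' ⊓ wᶜ) := by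
    intro a ha b hb a' ha' b' hb' heq
    have e1 : a ⊓ u = a' ⊓ u := by
      have := congrArg (· ⊓ u) heq
      simpa [pair_meet_left] using this
    have e2 : b ⊓ uᶜ = b' ⊓ uᶜ := by
      have := congrArg (· ⊓ uᶜ) heq
      simpa [pair_meet_right] using this
    rw [(trans1 a ha a' ha').mp e1, (trans2 b hb b' hb').mp e2]
  let H : A → B := fun x =>
    if hx : ∃ p : A × A, p.1 ∈ C ∧ p.2 ∈ C ∧ x = (p.1 ⊓ u) ⊔ (p.2 ⊓ uᶜ)
    then (h hx.choose.1 ⊓ w) ⊔ (h hx.choose.2 ⊓ wᶜ) else ⊥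
  have Hspec : ∀ a ∈ C, ∀ b ∈ C, H ((a⊓u)⊔(b⊓uᶜ)) = (h a ⊓ w) ⊔ (h b ⊓ wᶜ) := by
    intro a ha b hb
    have hx : ∃ p : A × A, p.1 ∈ C ∧ p.2 ∈ C ∧
        (a⊓u)⊔(b⊓uᶜ) = (p.1 ⊓ u) ⊔ (p.2 ⊓ uᶜ) := ⟨(a, b), ha, hb, rfl⟩
    show (if hx' : _ then _ else _) = _
    rw [dif_pos hx]
    exact welldef hx.choose.1 hx.choose_spec.1 hx.choose.2 hx.choose_spec.2.1
      a ha b hb hx.choose_spec.2.2.symm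
  have HeqOn : Set.EqOn H h C := by
    intro a ha
    have e := Hspec a ha a ha
    rw [pair_self, pair_self] at e
    exact e
  have Hu : H u = w := by
    have e := Hspec ⊤ hCtop ⊥ hCbot
    rw [top_inf_eq, bot_inf_eq, sup_bot_eq, htop0, hbot0, top_inf_eq, bot_inf_eq,
      sup_bot_eq] at e
    exact e
  refine ⟨H, ⟨⟨?_, ?_, ?_⟩, ?_, ?_, ?_⟩, HeqOn, Hu⟩
  · -- MapsTo
    intro x hx
    obtain ⟨a, ha, b, hb, rfl⟩ := (hmemC x).mp hx
    rw [Hspec a ha b hb, hmemD]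
    exact ⟨h a, hbij.1 ha, h b, hbij.1 hb, rfl⟩
  · -- InjOn
    intro x hx y hy hxy
    obtain ⟨a, ha, b, hb, rfl⟩ := (hmemC x).mp hx
    obtain ⟨a', ha', b', hb', rfl⟩ := (hmemC y).mp hy
    rw [Hspec a ha b hb, Hspec a' ha' b' hb'] at hxy
    have e1 : h a ⊓ w = h a' ⊓ w := by
      have := congrArg (· ⊓ w) hxy
      simpa [pair_meet_left] using this
    have e2 : h b ⊓ wᶜ = h b' ⊓ wᶜ := by
      have := congrArg (· ⊓ wᶜ) hxy
      simpa [pair_meet_right] using this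
    rw [(trans1 a ha a' ha').mpr e1, (trans2 b hb b' hb').mpr e2]
  · -- SurjOn
    intro y hy
    obtain ⟨c, hc, d, hd, rfl⟩ := (hmemD y).mp hy
    obtain ⟨a, ha, rfl⟩ := hbij.2.2 hc
    obtain ⟨b, hb, rfl⟩ := hbij.2.2 hd
    exact ⟨(a⊓u)⊔(b⊓uᶜ), (hmemC _).mpr ⟨a, ha, b, hb, rfl⟩, Hspec a ha b hb⟩
  · -- sup
    intro x hx y hy
    obtain ⟨a, ha, b, hb, rfl⟩ := (hmemC x).mp hx
    obtain ⟨c, hc, d, hd, rfl⟩ := (hmemC y).mp hy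
    rw [pair_sup, Hspec _ (hCsup a ha c hc) _ (hCsup b hb d hd),
      Hspec a ha b hb, Hspec c hc d hd, hsupH a ha c hc, hsupH b hb d hd, pair_sup]
  · -- inf
    intro x hx y hy
    obtain ⟨a, ha, b, hb, rfl⟩ := (hmemC x).mp hx
    obtain ⟨c, hc, d, hd, rfl⟩ := (hmemC y).mp hy
    rw [pair_inf, Hspec _ (hCinf a ha c hc) _ (hCinf b hb d hd),
      Hspec a ha b hb, Hspec c hc d hd, hinfH a ha c hc, hinfH b hb d hd, pair_inf]
  · -- compl
    intro x hx
    obtain ⟨a, ha, b, hb, rfl⟩ := (hmemC x).mp hx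
    rw [pair_compl, Hspec _ (hCcompl a ha) _ (hCcompl b hb),
      Hspec a ha b hb, hcomplH a ha, hcomplH b hb, pair_compl]
end

section
/- Let C ⊆ C₀ and D ⊆ D₀ be finite Boolean subalgebras, u ∈ C₀, and suppose D₀ is atomless. For every Boolean isomorphism h : C → D there exists w ∈ D₀ such that for all x ∈ C: x ≤ u iff h(x) ≤ w, and x ≤ u' iff h(x) ≤ w'. -/
/-- If `C ⊆ C₀` and `D ⊆ D₀` are finite Boolean subalgebras, `u ∈ C₀`, `D₀` is
atomless, and `h : C → D` is a Boolean isomorphism, then there is `w ∈ D₀` with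
`x ≤ u ↔ h x ≤ w` and `x ≤ u' ↔ h x ≤ w'` for all `x ∈ C`. -/
theorem exists_mirror_element {A B : Type*} [BooleanAlgebra A] [BooleanAlgebra B]
    {C : Set A} {D : Set B} (hC : IsBoolSubalg C) (hD : IsBoolSubalg D)
    (hCfin : C.Finite) (hDfin : D.Finite) (u : A)
    (hatomless : ∀ b : B, ¬IsAtom b)
    (h : A → B) (hiso : IsBoolIsoOn h C D) :
    ∃ w : B, ∀ x ∈ C, (x ≤ u ↔ h x ≤ w) ∧ (x ≤ uᶜ ↔ h x ≤ wᶜ) := by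
  classical
  obtain ⟨hbotC, htopC, hsupC, hinfC, hcomplC⟩ := hC
  obtain ⟨⟨hmaps, hinj, -⟩, hhsup, hhinf, hhcompl⟩ := hiso
  -- basic facts about h
  have hbot' : h ⊥ = ⊥ := by
    have h1 := hhinf ⊥ hbotC ⊥ᶜ (hcomplC ⊥ hbotC)
    rw [hhcompl ⊥ hbotC, inf_compl_eq_bot, inf_compl_eq_bot] at h1
    exact h1
  have hzero : ∀ x ∈ C, h x = ⊥ → x = ⊥ := fun x hx hhx =>
    hinj hx hbotC (by rw [hhx, hbot'])
  have hmono : ∀ x ∈ C, ∀ y ∈ C, x ≤ y → h x ≤ h y := by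
    intro x hx y hy hxy
    have h1 : h (x ⊓ y) = h x ⊓ h y := hhinf x hx y hy
    rw [inf_eq_left.2 hxy] at h1
    exact inf_eq_left.1 h1.symm
  -- finite sups stay in C
  have hsupmem : ∀ s : Finset A, (∀ a ∈ s, a ∈ C) → s.sup id ∈ C := fun s hs =>
    Finset.sup_induction hbotC (fun a ha b hb => hsupC a ha b hb) hs
  set Cfin := hCfin.toFinset with hCfinDef
  set c := (Cfin.filter (· ≤ u)).sup id with hcdef
  set d := (Cfin.filter (· ≤ uᶜ)).sup id with hddef
  have hcC : c ∈ C := hsupmem _ (fun a ha => hCfin.mem_toFinset.1 (Finset.mem_filter.1 ha).1)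
  have hdC : d ∈ C := hsupmem _ (fun a ha => hCfin.mem_toFinset.1 (Finset.mem_filter.1 ha).1)
  have hcu : c ≤ u := Finset.sup_le (fun a ha => (Finset.mem_filter.1 ha).2)
  have hdu : d ≤ uᶜ := Finset.sup_le (fun a ha => (Finset.mem_filter.1 ha).2)
  have hlec : ∀ x ∈ C, x ≤ u → x ≤ c := fun x hx hxu =>
    Finset.le_sup (f := id) (Finset.mem_filter.2 ⟨hCfin.mem_toFinset.2 hx, hxu⟩)
  have hled : ∀ x ∈ C, x ≤ uᶜ → x ≤ d := fun x hx hxu =>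
    Finset.le_sup (f := id) (Finset.mem_filter.2 ⟨hCfin.mem_toFinset.2 hx, hxu⟩)
  have hcd : c ⊓ d = ⊥ := le_bot_iff.1 (by
    calc c ⊓ d ≤ u ⊓ uᶜ := inf_le_inf hcu hdu
    _ = ⊥ := inf_compl_eq_bot)
  set e := (c ⊔ d)ᶜ with hedef
  have heC : e ∈ C := hcomplC _ (hsupC c hcC d hdC)
  have hce : c ⊓ e = ⊥ := le_bot_iff.1 (by
    calc c ⊓ e ≤ (c ⊔ d) ⊓ (c ⊔ d)ᶜ := inf_le_inf le_sup_left le_rfl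
    _ = ⊥ := inf_compl_eq_bot)
  have hde : d ⊓ e = ⊥ := le_bot_iff.1 (by
    calc d ⊓ e ≤ (c ⊔ d) ⊓ (c ⊔ d)ᶜ := inf_le_inf le_sup_right le_rfl
    _ = ⊥ := inf_compl_eq_bot)
  set m := h e with hmdef
  -- atomless: split any nonzero element
  have hsplit : ∀ p : B, ∃ q, p ≠ ⊥ → q ≠ ⊥ ∧ q < p := by
    intro p
    by_cases hp : p = ⊥
    · exact ⟨⊥, fun hne => absurd hp hne⟩
    · have h1 := hatomless p
      rw [IsAtom] at h1
      push_neg at h1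
      obtain ⟨b, hb1, hb2⟩ := h1 hp
      exact ⟨b, fun _ => ⟨hb2, hb1⟩⟩
  choose f hf using hsplit
  set Dfin := hDfin.toFinset with hDfinDef
  set S := Dfin.filter (fun p => p ≠ ⊥ ∧ p ≤ m ∧ ∀ z ∈ D, z ≠ ⊥ → z ≤ p → z = p) with hSdef
  set t := S.sup f with htdef
  have hSmem : ∀ p ∈ S, p ∈ D ∧ p ≠ ⊥ ∧ p ≤ m ∧ (∀ z ∈ D, z ≠ ⊥ → z ≤ p → z = p) := by
    intro p hp
    obtain ⟨h1, h2⟩ := Finset.mem_filter.1 hp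
    exact ⟨hDfin.mem_toFinset.1 h1, h2⟩
  have htm : t ≤ m := Finset.sup_le (fun p hp =>
    le_trans (hf p (hSmem p hp).2.1).2.le (hSmem p hp).2.2.1)
  -- disjointness of minimal elements
  have hdisjS : ∀ p ∈ S, ∀ q ∈ S, p ≠ q → p ⊓ q = ⊥ := by
    intro p hp q hq hpq
    obtain ⟨hpD, hpne, -, hpmin⟩ := hSmem p hp
    obtain ⟨hqD, hqne, -, hqmin⟩ := hSmem q hq
    by_contra hne
    have hpqD : p ⊓ q ∈ D := hD.2.2.2.1 p hpD q hqD
    have h1 : p ⊓ q = p := hpmin _ hpqD hne inf_le_left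
    have h2 : p ⊓ q = q := hqmin _ hpqD hne inf_le_right
    exact hpq (h1.symm.trans h2)
  -- every nonzero element of D below m contains a minimal element
  have hexS : ∀ y ∈ D, y ≤ m → y ≠ ⊥ → ∃ p ∈ S, p ≤ y := by
    intro y hyD hym hyne
    set T := Dfin.filter (fun z => z ≠ ⊥ ∧ z ≤ y) with hTdef
    have hyT : y ∈ T := Finset.mem_filter.2 ⟨hDfin.mem_toFinset.2 hyD, hyne, le_rfl⟩
    obtain ⟨p, hpT, hpmin⟩ := T.exists_minimal ⟨y, hyT⟩
    obtain ⟨hpDfin, hpne, hpy⟩ := Finset.mem_filter.1 hpT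
    refine ⟨p, Finset.mem_filter.2 ⟨hpDfin, hpne, le_trans hpy hym, ?_⟩, hpy⟩
    intro z hzD hzne hzp
    by_contra hzp'
    exact hzp' (le_antisymm hzp
      (hpmin (Finset.mem_filter.2 ⟨hDfin.mem_toFinset.2 hzD, hzne, le_trans hzp hpy⟩) hzp))
  -- key property A: nonzero elements of D below m meet t
  have hA : ∀ y ∈ D, y ≤ m → y ⊓ t = ⊥ → y = ⊥ := by
    intro y hyD hym hyt
    by_contra hyne
    obtain ⟨p, hpS, hpy⟩ := hexS y hyD hym hyne
    have hfp := hf p (hSmem p hpS).2.1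
    have h1 : f p ≤ y ⊓ t :=
      le_inf (le_trans hfp.2.le hpy) (Finset.le_sup hpS)
    rw [hyt, le_bot_iff] at h1
    exact hfp.1 h1
  -- key property B: nonzero elements of D below m are not below t
  have hB : ∀ y ∈ D, y ≤ m → y ≤ t → y = ⊥ := by
    intro y hyD hym hyt
    by_contra hyne
    obtain ⟨p, hpS, hpy⟩ := hexS y hyD hym hyne
    have hfp := hf p (hSmem p hpS).2.1
    have hpt : p ≤ t := le_trans hpy hyt
    have h1 : p ⊓ t ≤ f p := by
      rw [htdef, Finset.sup_inf_distrib_left]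
      refine Finset.sup_le (fun q hq => ?_)
      by_cases hpq : p = q
      · subst hpq; exact inf_le_right
      · have : p ⊓ f q ≤ p ⊓ q := inf_le_inf le_rfl (hf q (hSmem q hq).2.1).2.le
        rw [hdisjS p hpS q hq hpq] at this
        exact le_trans this bot_le
    rw [inf_eq_left.2 hpt] at h1
    exact absurd h1 hfp.2.not_ge
  -- the mirror element
  refine ⟨h c ⊔ t, ?_⟩
  have hhcD : h c ∈ D := hmaps hcC
  have hhcm : h c ⊓ m = ⊥ := by
    rw [hmdef, ← hhinf c hcC e heC, hce, hbot']
  have hhcd : h c ⊓ h d = ⊥ := by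
    rw [← hhinf c hcC d hdC, hcd, hbot']
  have hhdm : h d ⊓ m = ⊥ := by
    rw [hmdef, ← hhinf d hdC e heC, hde, hbot']
  have hhdt : h d ⊓ t = ⊥ := le_bot_iff.1 (by
    calc h d ⊓ t ≤ h d ⊓ m := inf_le_inf le_rfl htm
    _ = ⊥ := hhdm)
  -- general step: h x ⊓ m small forces x ≤ c ⊔ d
  have hstep : ∀ x ∈ C, h x ⊓ m = ⊥ → x ≤ c ⊔ d := by
    intro x hx hxm
    have hxe : x ⊓ e = ⊥ := hzero _ (hinfC x hx e heC)
      (by rw [hhinf x hx e heC, ← hmdef, hxm])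
    have h1 : x ≤ eᶜ := le_compl_iff_disjoint_right.2 (disjoint_iff.2 hxe)
    rwa [hedef, compl_compl] at h1
  have hsplitc : ∀ x ∈ C, x ≤ c ⊔ d → x ⊓ d = ⊥ → x ≤ c := by
    intro x _ hxcd hxd
    calc x = x ⊓ (c ⊔ d) := (inf_eq_left.2 hxcd).symm
    _ = x ⊓ c ⊔ x ⊓ d := inf_sup_left x c d
    _ = x ⊓ c := by rw [hxd, sup_bot_eq]
    _ ≤ c := inf_le_right
  have hsplitd : ∀ x ∈ C, x ≤ c ⊔ d → x ⊓ c = ⊥ → x ≤ d := by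
    intro x _ hxcd hxc
    calc x = x ⊓ (c ⊔ d) := (inf_eq_left.2 hxcd).symm
    _ = x ⊓ c ⊔ x ⊓ d := inf_sup_left x c d
    _ = x ⊓ d := by rw [hxc, bot_sup_eq]
    _ ≤ d := inf_le_right
  intro x hx
  have hhxD : h x ∈ D := hmaps hx
  have hmD : m ∈ D := hmaps heC
  have hyD : h x ⊓ m ∈ D := hD.2.2.2.1 _ hhxD _ hmD
  constructor
  · constructor
    · intro hxu
      exact le_trans (hmono x hx c hcC (hlec x hx hxu)) le_sup_left
    · intro hxw
      -- h x ⊓ m ≤ t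
      have hyt : h x ⊓ m ≤ t := by
        calc h x ⊓ m ≤ (h c ⊔ t) ⊓ m := inf_le_inf hxw le_rfl
        _ = h c ⊓ m ⊔ t ⊓ m := inf_sup_right (h c) t m
        _ = t ⊓ m := by rw [hhcm, bot_sup_eq]
        _ ≤ t := inf_le_left
      have hybot : h x ⊓ m = ⊥ := hB _ hyD inf_le_right hyt
      have hxcd : x ≤ c ⊔ d := hstep x hx hybot
      have hxd : x ⊓ d = ⊥ := by
        refine hzero _ (hinfC x hx d hdC) (le_bot_iff.1 ?_)
        calc h (x ⊓ d) = h x ⊓ h d := hhinf x hx d hdC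
        _ ≤ (h c ⊔ t) ⊓ h d := inf_le_inf hxw le_rfl
        _ = h c ⊓ h d ⊔ t ⊓ h d := inf_sup_right (h c) t (h d)
        _ = ⊥ := by rw [hhcd, inf_comm, hhdt, sup_bot_eq]
      exact le_trans (hsplitc x hx hxcd hxd) hcu
  · constructor
    · intro hxu
      have hxd : x ≤ d := hled x hx hxu
      refine le_trans (hmono x hx d hdC hxd) ?_
      refine le_compl_iff_disjoint_right.2 (disjoint_iff.2 ?_)
      calc h d ⊓ (h c ⊔ t) = h d ⊓ h c ⊔ h d ⊓ t := inf_sup_left (h d) (h c) t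
      _ = ⊥ := by rw [inf_comm (h d) (h c), hhcd, hhdt, sup_bot_eq]
    · intro hxw
      rw [compl_sup] at hxw
      have hxt : h x ≤ tᶜ := le_trans hxw inf_le_right
      have hxc' : h x ≤ (h c)ᶜ := le_trans hxw inf_le_left
      have hybot : h x ⊓ m = ⊥ := by
        refine hA _ hyD inf_le_right (le_bot_iff.1 ?_)
        calc h x ⊓ m ⊓ t ≤ tᶜ ⊓ t := inf_le_inf (le_trans inf_le_left hxt) le_rfl
        _ = ⊥ := by rw [inf_comm, inf_compl_eq_bot]
      have hxcd : x ≤ c ⊔ d := hstep x hx hybot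
      have hxc : x ⊓ c = ⊥ := by
        refine hzero _ (hinfC x hx c hcC) (le_bot_iff.1 ?_)
        calc h (x ⊓ c) = h x ⊓ h c := hhinf x hx c hcC
        _ ≤ (h c)ᶜ ⊓ h c := inf_le_inf hxc' le_rfl
        _ = ⊥ := by rw [inf_comm, inf_compl_eq_bot]
      exact le_trans (hsplitd x hx hxcd hxc) hdu
end

section
/- Any two countable, nontrivial, atomless Boolean algebras are isomorphic. -/
open Classical

namespace CABA

variable {A B : Type*} [BooleanAlgebra A] [BooleanAlgebra B]

/-- sup of a list -/
def lsup {α : Type*} [BooleanAlgebra α] (l : List α) : α := l.foldr (· ⊔ ·) ⊥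

@[simp] lemma lsup_nil {α} [BooleanAlgebra α] : lsup ([] : List α) = ⊥ := rfl
@[simp] lemma lsup_cons {α} [BooleanAlgebra α] (x : α) (l : List α) :
    lsup (x :: l) = x ⊔ lsup l := rfl

lemma lsup_append {α} [BooleanAlgebra α] (l₁ l₂ : List α) :
    lsup (l₁ ++ l₂) = lsup l₁ ⊔ lsup l₂ := by
  induction l₁ with
  | nil => simp
  | cons x t ih => simp [ih, sup_assoc]

lemma le_lsup {α} [BooleanAlgebra α] {l : List α} {x : α} (h : x ∈ l) : x ≤ lsup l := by
  induction l with
  | nil => simp at h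
  | cons y t ih =>
    rcases List.mem_cons.1 h with h | h
    · subst h; exact le_sup_left
    · exact le_sup_of_le_right (ih h)

lemma lsup_le {α} [BooleanAlgebra α] {l : List α} {c : α} (h : ∀ x ∈ l, x ≤ c) :
    lsup l ≤ c := by
  induction l with
  | nil => simp
  | cons y t ih => simp only [lsup_cons, sup_le_iff]
                   exact ⟨h y (by simp), ih fun x hx => h x (by simp [hx])⟩

lemma inf_lsup_le {α} [BooleanAlgebra α] {l : List α} {c d : α}
    (h : ∀ x ∈ l, c ⊓ x ≤ d) : c ⊓ lsup l ≤ d := by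
  induction l with
  | nil => simp
  | cons y t ih =>
    rw [lsup_cons, inf_sup_left]
    exact sup_le (h y (by simp)) (ih fun x hx => h x (by simp [hx]))

lemma inf_lsup_eq_bot {α} [BooleanAlgebra α] {l : List α} {c : α}
    (h : ∀ x ∈ l, c ⊓ x = ⊥) : c ⊓ lsup l = ⊥ :=
  le_bot_iff.1 (inf_lsup_le fun x hx => (h x hx).le)

/-- disjointness relation on pairs -/
def disj (p q : A × B) : Prop := p.1 ⊓ q.1 = ⊥ ∧ p.2 ⊓ q.2 = ⊥

lemma disj_symm : Symmetric (disj (A := A) (B := B)) := by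
  intro p q h; exact ⟨by rw [inf_comm]; exact h.1, by rw [inf_comm]; exact h.2⟩

/-- A finite partial isomorphism, given by matched finite partitions of ⊤. -/
structure PI (A B : Type*) [BooleanAlgebra A] [BooleanAlgebra B] where
  l : List (A × B)
  ne1 : ∀ p ∈ l, p.1 ≠ ⊥
  ne2 : ∀ p ∈ l, p.2 ≠ ⊥
  pw : l.Pairwise disj
  sup1 : lsup (l.map Prod.fst) = ⊤
  sup2 : lsup (l.map Prod.snd) = ⊤

lemma PI.ext' {P Q : PI A B} (h : P.l = Q.l) : P = Q := by
  cases P; cases Q; cases h; rfl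

noncomputable def Fm (P : PI A B) (a : A) : B :=
  lsup ((P.l.filter fun p => p.1 ≤ a).map Prod.snd)

def capt (P : PI A B) (a : A) : Prop :=
  lsup ((P.l.filter fun p => p.1 ≤ a).map Prod.fst) = a

def PI.swap (P : PI A B) : PI B A where
  l := P.l.map Prod.swap
  ne1 := by intro p hp; obtain ⟨q, hq, rfl⟩ := List.mem_map.1 hp; exact P.ne2 q hq
  ne2 := by intro p hp; obtain ⟨q, hq, rfl⟩ := List.mem_map.1 hp; exact P.ne1 q hq
  pw := by
    refine (List.pairwise_map).2 (P.pw.imp ?_)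
    intro p q h; exact ⟨h.2, h.1⟩
  sup1 := by rw [List.map_map]; exact P.sup2
  sup2 := by rw [List.map_map]; exact P.sup1

@[simp] lemma PI.swap_swap (P : PI A B) : P.swap.swap = P := by
  apply PI.ext'
  simp [PI.swap, List.map_map]

lemma filter_swap (P : PI A B) (b : B) :
    P.swap.l.filter (fun p => p.1 ≤ b) = (P.l.filter fun p => p.2 ≤ b).map Prod.swap := by
  show (P.l.map Prod.swap).filter _ = _
  induction P.l with
  | nil => rfl
  | cons p t ih =>
    by_cases h : p.2 ≤ b <;> simp [List.filter_cons, h, ih, Prod.swap]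

lemma Fm_swap (P : PI A B) (b : B) :
    Fm P.swap b = lsup ((P.l.filter fun p => p.2 ≤ b).map Prod.fst) := by
  rw [Fm, filter_swap, List.map_map]; rfl

lemma capt_swap (P : PI A B) (b : B) :
    capt P.swap b ↔ lsup ((P.l.filter fun p => p.2 ≤ b).map Prod.snd) = b := by
  rw [capt, filter_swap, List.map_map]; rfl

noncomputable def sel (P : PI A B) (a : A) : List (A × B) := P.l.filter fun p => p.1 ≤ a

lemma mem_sel {P : PI A B} {a : A} {q : A × B} : q ∈ sel P a ↔ q ∈ P.l ∧ q.1 ≤ a := by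
  simp [sel, List.mem_filter]

lemma Fm_def (P : PI A B) (a : A) : Fm P a = lsup ((sel P a).map Prod.snd) := rfl
lemma capt_def (P : PI A B) (a : A) : capt P a ↔ lsup ((sel P a).map Prod.fst) = a := Iff.rfl

lemma pw_disj {P : PI A B} {p q : A × B} (hp : p ∈ P.l) (hq : q ∈ P.l) (h : p ≠ q) :
    p.1 ⊓ q.1 = ⊥ ∧ p.2 ⊓ q.2 = ⊥ :=
  haveI : Std.Symm (disj (A := A) (B := B)) := ⟨fun _ _ h => disj_symm h⟩
  P.pw.forall hp hq h

/-- If `a` is captured and a piece is not below `a`, it is disjoint from `a`. -/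
lemma inf_eq_bot_of_not_le {P : PI A B} {a : A} (ha : capt P a) {q : A × B}
    (hq : q ∈ P.l) (h : ¬ q.1 ≤ a) : q.1 ⊓ a = ⊥ := by
  rw [capt_def] at ha
  rw [← ha]
  apply inf_lsup_eq_bot
  intro x hx
  obtain ⟨p, hp, rfl⟩ := List.mem_map.1 hx
  rw [mem_sel] at hp
  have hne : q ≠ p := fun he => h (he ▸ hp.2)
  exact (pw_disj hq hp.1 hne).1

lemma piece_cases {P : PI A B} {a : A} (ha : capt P a) {q : A × B} (hq : q ∈ P.l) :
    q.1 ≤ a ∨ q.1 ⊓ a = ⊥ := by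
  by_cases h : q.1 ≤ a
  · exact Or.inl h
  · exact Or.inr (inf_eq_bot_of_not_le ha hq h)

/-- Capture criterion: if every piece is below `a` or disjoint from `a`, then `a` is captured. -/
lemma capt_of_split {P : PI A B} {a : A} (h : ∀ q ∈ P.l, q.1 ≤ a ∨ q.1 ⊓ a = ⊥) :
    capt P a := by
  rw [capt_def]
  apply le_antisymm
  · apply lsup_le
    intro x hx
    obtain ⟨p, hp, rfl⟩ := List.mem_map.1 hx
    exact (mem_sel.1 hp).2
  · have h0 : a = a ⊓ lsup (P.l.map Prod.fst) := by rw [P.sup1, inf_top_eq]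
    conv_lhs => rw [h0]
    apply inf_lsup_le
    intro x hx
    obtain ⟨p, hp, rfl⟩ := List.mem_map.1 hx
    rcases h p hp with h1 | h1
    · exact le_trans inf_le_right (le_lsup (List.mem_map.2 ⟨p, mem_sel.2 ⟨hp, h1⟩, rfl⟩))
    · rw [inf_comm, h1]; exact bot_le

lemma le_Fm {P : PI A B} {a : A} {q : A × B} (hq : q ∈ P.l) (h : q.1 ≤ a) :
    q.2 ≤ Fm P a :=
  le_lsup (List.mem_map.2 ⟨q, mem_sel.2 ⟨hq, h⟩, rfl⟩)

lemma Fm_le {P : PI A B} {a : A} {c : B} (h : ∀ q ∈ P.l, q.1 ≤ a → q.2 ≤ c) :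
    Fm P a ≤ c := by
  rw [Fm_def]
  apply lsup_le
  intro x hx
  obtain ⟨p, hp, rfl⟩ := List.mem_map.1 hx
  rw [mem_sel] at hp
  exact h p hp.1 hp.2

lemma Fm_mono {P : PI A B} {a b : A} (h : a ≤ b) : Fm P a ≤ Fm P b :=
  Fm_le fun q hq h1 => le_Fm hq (h1.trans h)

/-- Cross lemma: for captured `a`, a piece's second component is below `Fm P a`
iff its first is below `a`. -/
lemma snd_le_Fm_iff {P : PI A B} {a : A} (ha : capt P a) {q : A × B} (hq : q ∈ P.l) :
    q.2 ≤ Fm P a ↔ q.1 ≤ a := by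
  constructor
  · intro h
    by_contra hn
    have h1 : q.1 ⊓ a = ⊥ := inf_eq_bot_of_not_le ha hq hn
    have h2 : q.2 ⊓ Fm P a = ⊥ := by
      rw [Fm_def]
      apply inf_lsup_eq_bot
      intro x hx
      obtain ⟨p, hp, rfl⟩ := List.mem_map.1 hx
      rw [mem_sel] at hp
      have hne : q ≠ p := by
        rintro rfl; exact hn hp.2
      exact (pw_disj hq hp.1 hne).2
    exact P.ne2 q hq (by rw [← inf_eq_left.2 h, h2])
  · exact le_Fm hq

lemma le_sup_resolve {P : PI A B} {x y : A} (hx : capt P x) (hy : capt P y)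
    {q : A × B} (hq : q ∈ P.l) (h : q.1 ≤ x ⊔ y) : q.1 ≤ x ∨ q.1 ≤ y := by
  rcases piece_cases hx hq with h1 | h1
  · exact Or.inl h1
  rcases piece_cases hy hq with h2 | h2
  · exact Or.inr h2
  exfalso
  apply P.ne1 q hq
  have : q.1 = q.1 ⊓ (x ⊔ y) := (inf_eq_left.2 h).symm
  rw [this, inf_sup_left, h1, h2, sup_idem]

lemma capt_sup {P : PI A B} {x y : A} (hx : capt P x) (hy : capt P y) :
    capt P (x ⊔ y) := by
  apply capt_of_split
  intro q hq
  rcases piece_cases hx hq with h1 | h1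
  · exact Or.inl (h1.trans le_sup_left)
  rcases piece_cases hy hq with h2 | h2
  · exact Or.inl (h2.trans le_sup_right)
  · exact Or.inr (by rw [inf_sup_left, h1, h2, sup_idem])

lemma Fm_sup {P : PI A B} {x y : A} (hx : capt P x) (hy : capt P y) :
    Fm P (x ⊔ y) = Fm P x ⊔ Fm P y := by
  apply le_antisymm
  · apply Fm_le
    intro q hq h
    rcases le_sup_resolve hx hy hq h with h1 | h1
    · exact (le_Fm hq h1).trans le_sup_left
    · exact (le_Fm hq h1).trans le_sup_right
  · exact sup_le (Fm_mono le_sup_left) (Fm_mono le_sup_right)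

lemma capt_inf {P : PI A B} {x y : A} (hx : capt P x) (hy : capt P y) :
    capt P (x ⊓ y) := by
  apply capt_of_split
  intro q hq
  rcases piece_cases hx hq with h1 | h1
  · rcases piece_cases hy hq with h2 | h2
    · exact Or.inl (le_inf h1 h2)
    · exact Or.inr (by rw [← inf_assoc]; rw [inf_of_le_left h1, h2])
  · refine Or.inr (le_bot_iff.1 ?_)
    calc q.1 ⊓ (x ⊓ y) ≤ q.1 ⊓ x := inf_le_inf_left _ inf_le_left
    _ = ⊥ := h1

lemma Fm_inf {P : PI A B} {x y : A} (hx : capt P x) (hy : capt P y) :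
    Fm P (x ⊓ y) = Fm P x ⊓ Fm P y := by
  apply le_antisymm
  · exact le_inf (Fm_mono inf_le_left) (Fm_mono inf_le_right)
  · rw [Fm_def P x]
    rw [inf_comm]
    apply inf_lsup_le
    intro b hb
    obtain ⟨p, hp, rfl⟩ := List.mem_map.1 hb
    rw [mem_sel] at hp
    rw [inf_comm, Fm_def P y]
    apply inf_lsup_le
    intro c hc
    obtain ⟨q, hq, rfl⟩ := List.mem_map.1 hc
    rw [mem_sel] at hq
    by_cases hpq : p = q
    · subst hpq
      rw [inf_idem]
      exact le_Fm hp.1 (le_inf hp.2 hq.2)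
    · rw [(pw_disj hp.1 hq.1 hpq).2]
      exact bot_le

lemma capt_compl {P : PI A B} {x : A} (hx : capt P x) : capt P xᶜ := by
  apply capt_of_split
  intro q hq
  rcases piece_cases hx hq with h1 | h1
  · refine Or.inr ?_
    rw [← le_bot_iff]
    calc q.1 ⊓ xᶜ ≤ x ⊓ xᶜ := inf_le_inf_right _ h1
    _ = ⊥ := inf_compl_eq_bot
  · exact Or.inl (le_compl_iff_disjoint_right.2 (disjoint_iff.2 h1))

lemma Fm_compl {P : PI A B} {x : A} (hx : capt P x) : Fm P xᶜ = (Fm P x)ᶜ := by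
  have hcompl : IsCompl (Fm P x) (Fm P xᶜ) := by
    constructor
    · rw [disjoint_iff]
      rw [Fm_def P x]
      rw [inf_comm]
      apply inf_lsup_eq_bot
      intro b hb
      obtain ⟨p, hp, rfl⟩ := List.mem_map.1 hb
      rw [mem_sel] at hp
      rw [inf_comm, Fm_def P xᶜ]
      apply inf_lsup_eq_bot
      intro c hc
      obtain ⟨q, hq, rfl⟩ := List.mem_map.1 hc
      rw [mem_sel] at hq
      have hpq : p ≠ q := by
        rintro rfl
        exact P.ne1 p hp.1 (le_bot_iff.1 ((le_inf hp.2 hq.2).trans inf_compl_eq_bot.le))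
      exact (pw_disj hp.1 hq.1 hpq).2
    · rw [codisjoint_iff]
      apply le_antisymm le_top
      rw [← P.sup2]
      apply lsup_le
      intro b hb
      obtain ⟨p, hp, rfl⟩ := List.mem_map.1 hb
      rcases piece_cases hx hp with h1 | h1
      · exact (le_Fm hp h1).trans le_sup_left
      · have : p.1 ≤ xᶜ := le_compl_iff_disjoint_right.2 (disjoint_iff.2 h1)
        exact (le_Fm hp this).trans le_sup_right
  exact hcompl.compl_eq.symm

lemma filter_eq_of_capt {P : PI A B} {x : A} (hx : capt P x) :
    (P.l.filter fun p => p.2 ≤ Fm P x) = P.l.filter fun p => p.1 ≤ x :=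
  List.filter_congr fun p hp => by
    simp only [decide_eq_decide]
    exact snd_le_Fm_iff hx hp

lemma capt_swap_Fm {P : PI A B} {x : A} (hx : capt P x) : capt P.swap (Fm P x) := by
  rw [capt_swap, filter_eq_of_capt hx]
  rfl

lemma Fm_swap_Fm {P : PI A B} {x : A} (hx : capt P x) : Fm P.swap (Fm P x) = x := by
  rw [Fm_swap, filter_eq_of_capt hx]
  exact hx

/-- Refinement of partial isomorphisms. -/
def Ref (Q P : PI A B) : Prop := ∀ q ∈ Q.l, ∃ p ∈ P.l, q.1 ≤ p.1 ∧ q.2 ≤ p.2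

lemma Ref.refl {P : PI A B} : Ref P P := fun q hq => ⟨q, hq, le_rfl, le_rfl⟩

lemma Ref.trans {R Q P : PI A B} (h1 : Ref R Q) (h2 : Ref Q P) : Ref R P := by
  intro r hr
  obtain ⟨q, hq, hq1, hq2⟩ := h1 r hr
  obtain ⟨p, hp, hp1, hp2⟩ := h2 q hq
  exact ⟨p, hp, hq1.trans hp1, hq2.trans hp2⟩

lemma Ref.swap {Q P : PI A B} (h : Ref Q P) : Ref Q.swap P.swap := by
  intro q hq
  obtain ⟨q', hq', rfl⟩ := List.mem_map.1 hq
  obtain ⟨p, hp, h1, h2⟩ := h q' hq'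
  exact ⟨p.swap, List.mem_map.2 ⟨p, hp, rfl⟩, h2, h1⟩

lemma capt_of_ref {Q P : PI A B} (hr : Ref Q P) {a : A} (ha : capt P a) :
    capt Q a := by
  apply capt_of_split
  intro q hq
  obtain ⟨p, hp, h1, _⟩ := hr q hq
  rcases piece_cases ha hp with h2 | h2
  · exact Or.inl (h1.trans h2)
  · refine Or.inr (le_bot_iff.1 ?_)
    calc q.1 ⊓ a ≤ p.1 ⊓ a := inf_le_inf_right _ h1
    _ = ⊥ := h2

lemma Fm_of_ref {Q P : PI A B} (hr : Ref Q P) {a : A} (ha : capt P a) :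
    Fm Q a = Fm P a := by
  apply le_antisymm
  · apply Fm_le
    intro q hq hqa
    obtain ⟨p, hp, h1, h2⟩ := hr q hq
    have hpa : p.1 ≤ a := by
      rcases piece_cases ha hp with h3 | h3
      · exact h3
      · exfalso
        exact Q.ne1 q hq (le_bot_iff.1 (h3 ▸ le_inf h1 hqa))
    exact h2.trans (le_Fm hp hpa)
  · apply Fm_le
    intro p hp hpa
    have h0 : p.2 = p.2 ⊓ lsup (Q.l.map Prod.snd) := by rw [Q.sup2, inf_top_eq]
    conv_lhs => rw [h0]
    apply inf_lsup_le
    intro b hb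
    obtain ⟨q, hq, rfl⟩ := List.mem_map.1 hb
    obtain ⟨r, hrm, h1, h2⟩ := hr q hq
    by_cases hpr : p = r
    · subst hpr
      exact inf_le_right.trans (le_Fm hq (h1.trans hpa))
    · have hb2 : p.2 ⊓ q.2 = ⊥ :=
        le_bot_iff.1 ((inf_le_inf_left p.2 h2).trans (pw_disj hp hrm hpr).2.le)
      rw [hb2]
      exact bot_le
lemma le_of_inf_compl_eq_bot {α : Type*} [BooleanAlgebra α] {x y : α} (h : x ⊓ yᶜ = ⊥) :
    x ≤ y := by
  calc x = x ⊓ y ⊔ x ⊓ yᶜ := by rw [← inf_sup_left, sup_compl_eq_top, inf_top_eq]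
  _ = x ⊓ y := by rw [h, sup_bot_eq]
  _ ≤ y := inf_le_right

lemma split_piece (hB : ∀ b : B, ¬IsAtom b) (a : A) (p : A × B)
    (h1 : p.1 ≠ ⊥) (h2 : p.2 ≠ ⊥) :
    ∃ s : List (A × B),
      (∀ q ∈ s, q.1 ≠ ⊥) ∧ (∀ q ∈ s, q.2 ≠ ⊥) ∧ s.Pairwise disj ∧
      lsup (s.map Prod.fst) = p.1 ∧ lsup (s.map Prod.snd) = p.2 ∧
      (∀ q ∈ s, q.1 ≤ p.1 ∧ q.2 ≤ p.2) ∧ (∀ q ∈ s, q.1 ≤ a ∨ q.1 ⊓ a = ⊥) := by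
  by_cases hx : p.1 ⊓ a = ⊥
  · refine ⟨[p], ?_, ?_, ?_, ?_, ?_, ?_, ?_⟩ <;> simp [h1, h2, hx]
  by_cases hy : p.1 ⊓ aᶜ = ⊥
  · refine ⟨[p], ?_, ?_, ?_, ?_, ?_, ?_, ?_⟩ <;>
      simp [h1, h2, Or.inl (le_of_inf_compl_eq_bot hy)]
  · have hatom := hB p.2
    simp only [IsAtom, h2, ne_eq, not_false_iff, true_and, not_forall] at hatom
    obtain ⟨c, hc1, hc2⟩ := hatom
    refine ⟨[(p.1 ⊓ a, c), (p.1 ⊓ aᶜ, p.2 ⊓ cᶜ)], ?_, ?_, ?_, ?_, ?_, ?_, ?_⟩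
    · intro q hq
      rcases List.mem_cons.1 hq with rfl | hq
      · exact hx
      · simp only [List.mem_singleton] at hq; subst hq; exact hy
    · intro q hq
      rcases List.mem_cons.1 hq with rfl | hq
      · exact hc2
      · simp only [List.mem_singleton] at hq; subst hq
        intro hcon
        exact hc1.not_ge (le_of_inf_compl_eq_bot hcon)
    · refine List.pairwise_cons.2 ⟨?_, List.pairwise_singleton _ _⟩
      intro q hq
      simp only [List.mem_singleton] at hq; subst hq
      constructor
      · exact le_bot_iff.1 ((inf_le_inf inf_le_right inf_le_right).trans inf_compl_eq_bot.le)
      · exact le_bot_iff.1 ((inf_le_inf le_rfl inf_le_right).trans inf_compl_eq_bot.le)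
    · simp [← inf_sup_left]
    · simp only [List.map_cons, List.map_nil, lsup_cons, lsup_nil, sup_bot_eq]
      rw [sup_inf_left, sup_compl_eq_top, inf_top_eq, sup_eq_right.2 hc1.le]
    · intro q hq
      rcases List.mem_cons.1 hq with rfl | hq
      · exact ⟨inf_le_left, hc1.le⟩
      · simp only [List.mem_singleton] at hq; subst hq
        exact ⟨inf_le_left, inf_le_left⟩
    · intro q hq
      rcases List.mem_cons.1 hq with rfl | hq
      · exact Or.inl inf_le_right
      · simp only [List.mem_singleton] at hq; subst hq
        refine Or.inr (le_bot_iff.1 ?_)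
        calc p.1 ⊓ aᶜ ⊓ a ≤ aᶜ ⊓ a := inf_le_inf_right _ inf_le_right
        _ = ⊥ := by rw [inf_comm]; exact inf_compl_eq_bot
lemma list_split (hB : ∀ b : B, ¬IsAtom b) (a : A) :
    ∀ l : List (A × B), (∀ p ∈ l, p.1 ≠ ⊥) → (∀ p ∈ l, p.2 ≠ ⊥) → l.Pairwise disj →
    ∃ l' : List (A × B),
      (∀ q ∈ l', q.1 ≠ ⊥) ∧ (∀ q ∈ l', q.2 ≠ ⊥) ∧ l'.Pairwise disj ∧
      lsup (l'.map Prod.fst) = lsup (l.map Prod.fst) ∧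
      lsup (l'.map Prod.snd) = lsup (l.map Prod.snd) ∧
      (∀ q ∈ l', ∃ p ∈ l, q.1 ≤ p.1 ∧ q.2 ≤ p.2) ∧
      (∀ q ∈ l', q.1 ≤ a ∨ q.1 ⊓ a = ⊥) := by
  intro l
  induction l with
  | nil => exact fun _ _ _ => ⟨[], by simp⟩
  | cons p t ih =>
    intro hne1 hne2 hpw
    obtain ⟨t', ht1, ht2, htpw, hts1, hts2, htp, hta⟩ :=
      ih (fun q hq => hne1 q (by simp [hq])) (fun q hq => hne2 q (by simp [hq]))
        (List.pairwise_cons.1 hpw).2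
    obtain ⟨s, hs1, hs2, hspw, hss1, hss2, hsp, hsa⟩ :=
      split_piece hB a p (hne1 p (by simp)) (hne2 p (by simp))
    have hhead : ∀ r ∈ t, disj p r := (List.pairwise_cons.1 hpw).1
    refine ⟨s ++ t', ?_, ?_, ?_, ?_, ?_, ?_, ?_⟩
    · intro q hq
      rcases List.mem_append.1 hq with h | h
      · exact hs1 q h
      · exact ht1 q h
    · intro q hq
      rcases List.mem_append.1 hq with h | h
      · exact hs2 q h
      · exact ht2 q h
    · refine List.pairwise_append.2 ⟨hspw, htpw, ?_⟩
      intro x hx y hy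
      obtain ⟨r, hr, hr1, hr2⟩ := htp y hy
      have hd := hhead r hr
      constructor
      · exact le_bot_iff.1 ((inf_le_inf (hsp x hx).1 hr1).trans hd.1.le)
      · exact le_bot_iff.1 ((inf_le_inf (hsp x hx).2 hr2).trans hd.2.le)
    · rw [List.map_append, lsup_append, hss1, hts1, List.map_cons, lsup_cons]
    · rw [List.map_append, lsup_append, hss2, hts2, List.map_cons, lsup_cons]
    · intro q hq
      rcases List.mem_append.1 hq with h | h
      · exact ⟨p, by simp, hsp q h⟩
      · obtain ⟨r, hr, h1, h2⟩ := htp q h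
        exact ⟨r, by simp [hr], h1, h2⟩
    · intro q hq
      rcases List.mem_append.1 hq with h | h
      · exact hsa q h
      · exact hta q h

lemma exists_extension (hB : ∀ b : B, ¬IsAtom b) (P : PI A B) (a : A) :
    ∃ Q : PI A B, Ref Q P ∧ capt Q a := by
  obtain ⟨l', h1, h2, hpw, hs1, hs2, hp, ha⟩ :=
    list_split hB a P.l P.ne1 P.ne2 P.pw
  refine ⟨⟨l', h1, h2, hpw, by rw [hs1, P.sup1], by rw [hs2, P.sup2]⟩, hp, ?_⟩
  exact capt_of_split ha

lemma exists_extension_snd (hA : ∀ a : A, ¬IsAtom a) (P : PI A B) (b : B) :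
    ∃ Q : PI A B, Ref Q P ∧ capt Q.swap b := by
  obtain ⟨Q', h1, h2⟩ := exists_extension hA P.swap b
  refine ⟨Q'.swap, ?_, ?_⟩
  · have := h1.swap
    rwa [PI.swap_swap] at this
  · rwa [PI.swap_swap]
section Seq

variable [Nontrivial A] [Nontrivial B]

noncomputable def base : PI A B where
  l := [(⊤, ⊤)]
  ne1 := by simp
  ne2 := by simp
  pw := List.pairwise_singleton _ _
  sup1 := by simp [lsup]
  sup2 := by simp [lsup]

variable (hA : ∀ a : A, ¬IsAtom a) (hB : ∀ b : B, ¬IsAtom b) (eA : ℕ → A) (eB : ℕ → B)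

noncomputable def seq : ℕ → PI A B
  | 0 => base
  | n + 1 =>
    (exists_extension_snd hA (exists_extension hB (seq n) (eA n)).choose (eB n)).choose

lemma seq_ref (n : ℕ) : Ref (seq hA hB eA eB (n + 1)) (seq hA hB eA eB n) := by
  have h1 := (exists_extension hB (seq hA hB eA eB n) (eA n)).choose_spec
  have h2 := (exists_extension_snd hA
    (exists_extension hB (seq hA hB eA eB n) (eA n)).choose (eB n)).choose_spec
  exact h2.1.trans h1.1

lemma seq_capt_fst (n : ℕ) : capt (seq hA hB eA eB (n + 1)) (eA n) := by
  have h1 := (exists_extension hB (seq hA hB eA eB n) (eA n)).choose_spec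
  have h2 := (exists_extension_snd hA
    (exists_extension hB (seq hA hB eA eB n) (eA n)).choose (eB n)).choose_spec
  exact capt_of_ref h2.1 h1.2

lemma seq_capt_snd (n : ℕ) : capt (seq hA hB eA eB (n + 1)).swap (eB n) :=
  (exists_extension_snd hA
    (exists_extension hB (seq hA hB eA eB n) (eA n)).choose (eB n)).choose_spec.2

lemma seq_ref_le {n m : ℕ} (h : n ≤ m) :
    Ref (seq hA hB eA eB m) (seq hA hB eA eB n) := by
  induction h with
  | refl => exact Ref.refl
  | step _ ih => exact (seq_ref hA hB eA eB _).trans ih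

end Seq

end CABA

open CABA in
/-- Any two countable nontrivial atomless Boolean algebras are isomorphic. -/
theorem countable_atomless_boolean_algebras_iso
    {A B : Type*} [BooleanAlgebra A] [BooleanAlgebra B]
    [Countable A] [Countable B] [Nontrivial A] [Nontrivial B]
    (hA : ∀ a : A, ¬IsAtom a) (hB : ∀ b : B, ¬IsAtom b) :
    Nonempty {f : A ≃ B // ∀ x y : A, f (x ⊔ y) = f x ⊔ f y ∧
      f (x ⊓ y) = f x ⊓ f y ∧ f xᶜ = (f x)ᶜ} := by
  obtain ⟨eA, hsA⟩ := exists_surjective_nat A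
  obtain ⟨eB, hsB⟩ := exists_surjective_nat B
  set P : ℕ → PI A B := seq hA hB eA eB with hPdef
  -- stages
  let iA : A → ℕ := fun a => (hsA a).choose + 1
  let iB : B → ℕ := fun b => (hsB b).choose + 1
  have hiA : ∀ a, capt (P (iA a)) a := by
    intro a
    have := seq_capt_fst hA hB eA eB (hsA a).choose
    rwa [(hsA a).choose_spec] at this
  have hiB : ∀ b, capt (P (iB b)).swap b := by
    intro b
    have := seq_capt_snd hA hB eA eB (hsB b).choose
    rwa [(hsB b).choose_spec] at this
  let f : A → B := fun a => Fm (P (iA a)) a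
  let g : B → A := fun b => Fm (P (iB b)).swap b
  have hf : ∀ a m, iA a ≤ m → capt (P m) a ∧ Fm (P m) a = f a := by
    intro a m hm
    have hr := seq_ref_le hA hB eA eB hm
    exact ⟨capt_of_ref hr (hiA a), Fm_of_ref hr (hiA a)⟩
  have hg : ∀ b m, iB b ≤ m → capt (P m).swap b ∧ Fm (P m).swap b = g b := by
    intro b m hm
    have hr := (seq_ref_le hA hB eA eB hm).swap
    exact ⟨capt_of_ref hr (hiB b), Fm_of_ref hr (hiB b)⟩
  have hgf : ∀ a, g (f a) = a := by
    intro a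
    set m := max (iA a) (iB (f a))
    obtain ⟨h1, h2⟩ := hf a m (le_max_left _ _)
    obtain ⟨h3, h4⟩ := hg (f a) m (le_max_right _ _)
    have h5 := Fm_swap_Fm h1
    rw [h2] at h5
    rw [← h4, h5]
  have hfg : ∀ b, f (g b) = b := by
    intro b
    set m := max (iB b) (iA (g b))
    obtain ⟨h1, h2⟩ := hg b m (le_max_left _ _)
    obtain ⟨h3, h4⟩ := hf (g b) m (le_max_right _ _)
    have h5 := Fm_swap_Fm h1
    rw [PI.swap_swap] at h5
    rw [h2] at h5
    rw [← h4, h5]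
  refine ⟨⟨⟨f, g, hgf, hfg⟩, ?_⟩⟩
  intro x y
  set m := max (max (iA x) (iA y)) (max (max (iA (x ⊔ y)) (iA (x ⊓ y))) (iA xᶜ))
  obtain ⟨hx, hx'⟩ := hf x m (le_max_of_le_left (le_max_left _ _))
  obtain ⟨hy, hy'⟩ := hf y m (le_max_of_le_left (le_max_right _ _))
  obtain ⟨_, hsup⟩ := hf (x ⊔ y) m
    (le_max_of_le_right (le_max_of_le_left (le_max_left _ _)))
  obtain ⟨_, hinf⟩ := hf (x ⊓ y) m
    (le_max_of_le_right (le_max_of_le_left (le_max_right _ _)))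
  obtain ⟨_, hcmp⟩ := hf xᶜ m (le_max_of_le_right (le_max_right _ _))
  refine ⟨?_, ?_, ?_⟩
  · show f (x ⊔ y) = f x ⊔ f y
    rw [← hsup, ← hx', ← hy', Fm_sup hx hy]
  · show f (x ⊓ y) = f x ⊓ f y
    rw [← hinf, ← hx', ← hy', Fm_inf hx hy]
  · show f xᶜ = (f x)ᶜ
    rw [← hcmp, ← hx', Fm_compl hx]
end

section
/- Any two countable graphs satisfying the extension property are isomorphic. -/
/-- A graph has the extension property if for any finite disjoint vertex sets
`A`, `B` there is a vertex outside `A ∪ B` adjacent to everything in `A` and to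
nothing in `B`. -/
def SimpleGraph.ExtensionProperty {V : Type*} (G : SimpleGraph V) : Prop :=
  ∀ A B : Finset V, Disjoint A B →
    ∃ v : V, v ∉ A ∧ v ∉ B ∧ (∀ a ∈ A, G.Adj v a) ∧ ∀ b ∈ B, ¬G.Adj v b

/-- A finite partial isomorphism between `G` and `H`, given as a list of pairs. -/
def PartIso {V W : Type*} (G : SimpleGraph V) (H : SimpleGraph W)
    (L : List (V × W)) : Prop :=
  ∀ p ∈ L, ∀ q ∈ L, (p.1 = q.1 ↔ p.2 = q.2) ∧ (G.Adj p.1 q.1 ↔ H.Adj p.2 q.2)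

lemma PartIso.swap {V W : Type*} {G : SimpleGraph V} {H : SimpleGraph W}
    {L : List (V × W)} (h : PartIso G H L) : PartIso H G (L.map Prod.swap) := by
  intro p hp q hq
  simp only [List.mem_map] at hp hq
  obtain ⟨p', hp', rfl⟩ := hp
  obtain ⟨q', hq', rfl⟩ := hq
  exact ⟨(h p' hp' q' hq').1.symm, (h p' hp' q' hq').2.symm⟩

lemma PartIso.extend {V W : Type*} {G : SimpleGraph V} {H : SimpleGraph W}
    (hH : H.ExtensionProperty) {L : List (V × W)} (hL : PartIso G H L) (v : V) :
    ∃ w, PartIso G H ((v, w) :: L) := by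
  classical
  by_cases hv : ∃ w, (v, w) ∈ L
  · obtain ⟨w, hw⟩ := hv
    refine ⟨w, fun p hp q hq => hL p ?_ q ?_⟩ <;>
      [rcases List.mem_cons.1 hp with rfl | h; rcases List.mem_cons.1 hq with rfl | h] <;>
      first | exact hw | exact h
  · push_neg at hv
    set A : Finset W := ((L.filter fun p => G.Adj v p.1).map Prod.snd).toFinset with hA
    set B : Finset W := ((L.filter fun p => ¬ G.Adj v p.1).map Prod.snd).toFinset with hB
    have memA : ∀ b, b ∈ A ↔ ∃ a, (a, b) ∈ L ∧ G.Adj v a := by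
      intro b
      simp only [hA, List.mem_toFinset, List.mem_map, List.mem_filter, decide_eq_true_eq]
      constructor
      · rintro ⟨⟨a, b'⟩, ⟨hmem, hadj⟩, rfl⟩; exact ⟨a, hmem, hadj⟩
      · rintro ⟨a, hmem, hadj⟩; exact ⟨(a, b), ⟨hmem, hadj⟩, rfl⟩
    have memB : ∀ b, b ∈ B ↔ ∃ a, (a, b) ∈ L ∧ ¬ G.Adj v a := by
      intro b
      simp only [hB, List.mem_toFinset, List.mem_map, List.mem_filter, decide_eq_true_eq]
      constructor
      · rintro ⟨⟨a, b'⟩, ⟨hmem, hadj⟩, rfl⟩; exact ⟨a, hmem, by simpa using hadj⟩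
      · rintro ⟨a, hmem, hadj⟩; exact ⟨(a, b), ⟨hmem, by simpa using hadj⟩, rfl⟩
    have hdisj : Disjoint A B := by
      rw [Finset.disjoint_left]
      intro b hbA hbB
      obtain ⟨a₁, h₁, hadj₁⟩ := (memA b).1 hbA
      obtain ⟨a₂, h₂, hadj₂⟩ := (memB b).1 hbB
      have heq : a₁ = a₂ := (hL (a₁, b) h₁ (a₂, b) h₂).1.2 rfl
      exact hadj₂ (heq ▸ hadj₁)
    obtain ⟨w, hwA, hwB, hadjA, hadjB⟩ := hH A B hdisj
    have key : ∀ a b, (a, b) ∈ L → v ≠ a ∧ w ≠ b ∧ (G.Adj v a ↔ H.Adj w b) := by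
      intro a b hab
      have hva : v ≠ a := fun h => hv b (h ▸ hab)
      have hiff : G.Adj v a ↔ H.Adj w b := by
        by_cases h : G.Adj v a
        · exact iff_of_true h (hadjA b ((memA b).2 ⟨a, hab, h⟩))
        · exact iff_of_false h (hadjB b ((memB b).2 ⟨a, hab, h⟩))
      refine ⟨hva, fun h => ?_, hiff⟩
      by_cases hadj : G.Adj v a
      · exact hwA (h ▸ (memA b).2 ⟨a, hab, hadj⟩)
      · exact hwB (h ▸ (memB b).2 ⟨a, hab, hadj⟩)
    refine ⟨w, fun p hp q hq => ?_⟩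
    rcases List.mem_cons.1 hp with rfl | hp' <;> rcases List.mem_cons.1 hq with rfl | hq'
    · exact ⟨by simp, by simp⟩
    · obtain ⟨h1, h2, h3⟩ := key q.1 q.2 hq'
      exact ⟨iff_of_false h1 h2, h3⟩
    · obtain ⟨h1, h2, h3⟩ := key p.1 p.2 hp'
      exact ⟨iff_of_false (Ne.symm h1) (Ne.symm h2),
        by rw [SimpleGraph.adj_comm, SimpleGraph.adj_comm H]; exact h3⟩
    · exact hL p hp' q hq'

lemma PartIso.extend' {V W : Type*} {G : SimpleGraph V} {H : SimpleGraph W}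
    (hG : G.ExtensionProperty) {L : List (V × W)} (hL : PartIso G H L) (w : W) :
    ∃ v, PartIso G H ((v, w) :: L) := by
  obtain ⟨v, hv⟩ := PartIso.extend hG hL.swap w
  refine ⟨v, fun p hp q hq => ?_⟩
  have h := hv p.swap (by
      rcases List.mem_cons.1 hp with rfl | hp'
      · exact List.mem_cons_self
      · exact List.mem_cons_of_mem _ (List.mem_map_of_mem (f := Prod.swap) hp'))
    q.swap (by
      rcases List.mem_cons.1 hq with rfl | hq'
      · exact List.mem_cons_self
      · exact List.mem_cons_of_mem _ (List.mem_map_of_mem (f := Prod.swap) hq'))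
  exact ⟨h.1.symm, h.2.symm⟩

/-- Any two countable graphs with the extension property are isomorphic. -/
theorem iso_of_extensionProperty {V W : Type*} [Countable V] [Countable W]
    (G : SimpleGraph V) (H : SimpleGraph W)
    (hG : G.ExtensionProperty) (hH : H.ExtensionProperty) :
    Nonempty (G ≃g H) := by
  classical
  have hVinf : Infinite V := by
    rw [← not_finite_iff_infinite]
    intro h
    have := Fintype.ofFinite V
    obtain ⟨v, _, hv, _, _⟩ := hG ∅ Finset.univ (by simp)
    exact hv (Finset.mem_univ v)
  have hWinf : Infinite W := by
    rw [← not_finite_iff_infinite]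
    intro h
    have := Fintype.ofFinite W
    obtain ⟨w, _, hw, _, _⟩ := hH ∅ Finset.univ (by simp)
    exact hw (Finset.mem_univ w)
  obtain ⟨dV⟩ := nonempty_denumerable V
  obtain ⟨dW⟩ := nonempty_denumerable W
  let eV : ℕ ≃ V := (dV.eqv).symm
  let eW : ℕ ≃ W := (dW.eqv).symm
  -- one-step extension covering both `eV n` and `eW n`
  have step : ∀ L : List (V × W), PartIso G H L → ∀ n : ℕ,
      ∃ L' : List (V × W), PartIso G H L' ∧ L ⊆ L' ∧
        (∃ w, (eV n, w) ∈ L') ∧ (∃ v, (v, eW n) ∈ L') := by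
    intro L hL n
    obtain ⟨w, hw⟩ := PartIso.extend hH hL (eV n)
    obtain ⟨v, hv⟩ := PartIso.extend' hG hw (eW n)
    refine ⟨(v, eW n) :: (eV n, w) :: L, hv,
      fun x hx => List.mem_cons_of_mem _ (List.mem_cons_of_mem _ hx),
      ⟨w, List.mem_cons_of_mem _ (List.mem_cons_self)⟩,
      ⟨v, List.mem_cons_self⟩⟩
  choose F hF1 hF2 hF3 hF4 using step
  -- the chain
  let seq : ℕ → {L : List (V × W) // PartIso G H L} := fun n =>
    Nat.rec ⟨[], by intro p hp; simp at hp⟩ (fun n p => ⟨F p.1 p.2 n, hF1 p.1 p.2 n⟩) n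
  have hseq : ∀ n, (seq (n + 1)).1 = F (seq n).1 (seq n).2 n := fun n => rfl
  have mono : ∀ m n, m ≤ n → (seq m).1 ⊆ (seq n).1 := by
    intro m n hmn
    induction n with
    | zero => rw [Nat.le_zero.1 hmn]; exact fun x hx => hx
    | succ k ih =>
      rcases Nat.le_succ_iff_eq_or_le.mp hmn with rfl | h
      · exact fun x hx => hx
      · exact fun x hx => (hF2 (seq k).1 (seq k).2 k) (ih h hx)
  have huniq : ∀ (a : V) (b b' : W) (m n : ℕ),
      (a, b) ∈ (seq m).1 → (a, b') ∈ (seq n).1 → b = b' := by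
    intro a b b' m n hm hn
    have h1 := mono m (max m n) (le_max_left _ _) hm
    have h2 := mono n (max m n) (le_max_right _ _) hn
    exact ((seq (max m n)).2 (a, b) h1 (a, b') h2).1.1 rfl
  have huniq' : ∀ (a a' : V) (b : W) (m n : ℕ),
      (a, b) ∈ (seq m).1 → (a', b) ∈ (seq n).1 → a = a' := by
    intro a a' b m n hm hn
    have h1 := mono m (max m n) (le_max_left _ _) hm
    have h2 := mono n (max m n) (le_max_right _ _) hn
    exact ((seq (max m n)).2 (a, b) h1 (a', b) h2).1.2 rfl
  have hf : ∀ v : V, ∃ w, (v, w) ∈ (seq (eV.symm v + 1)).1 := by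
    intro v
    have := hF3 (seq (eV.symm v)).1 (seq (eV.symm v)).2 (eV.symm v)
    rw [← hseq] at this
    simpa using this
  have hg : ∀ w : W, ∃ v, (v, w) ∈ (seq (eW.symm w + 1)).1 := by
    intro w
    have := hF4 (seq (eW.symm w)).1 (seq (eW.symm w)).2 (eW.symm w)
    rw [← hseq] at this
    simpa using this
  choose f hfmem using hf
  choose g hgmem using hg
  have hgf : ∀ v, g (f v) = v := fun v =>
    huniq' (g (f v)) v (f v) (eW.symm (f v) + 1) (eV.symm v + 1) (hgmem (f v)) (hfmem v)
  have hfg : ∀ w, f (g w) = w := fun w =>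
    huniq (g w) (f (g w)) w (eV.symm (g w) + 1) (eW.symm w + 1) (hfmem (g w)) (hgmem w)
  have hadj : ∀ u v : V, H.Adj (f u) (f v) ↔ G.Adj u v := by
    intro u v
    set m := eV.symm u + 1
    set n := eV.symm v + 1
    have h1 := mono m (max m n) (le_max_left _ _) (hfmem u)
    have h2 := mono n (max m n) (le_max_right _ _) (hfmem v)
    exact (((seq (max m n)).2 (u, f u) h1 (v, f v) h2).2).symm
  exact ⟨⟨⟨f, g, hgf, hfg⟩, hadj _ _⟩⟩
end
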